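/- Define gf(a,b,c,d) to be the generating function of all lattice paths from (a,b) to (c,d) in Z x Z using unit steps to the right and downward, where a right step from (u,v) to (u+1,v) has weight (X q^{u-2v} + Y q^{2v-u})/2 and each down step has weight 1. Then for a \le c and b \ge d, gf(a,b,c,d) = \prod_{j=1}^{c-a} ( (X q^{j-1-2b+a} + Y q^{-j+1+2d-a}) (1 - q^{2(b-d)+2j}) ) / ( 2 (1 - q^{2j}) ), and gf(a,b,c,d) = 0 if a > c or b < d. -/

import Mathlib

/-- The field of rational functions in the three indeterminates `X`, `Y`, `q`. -/
noncomputable abbrev MyF : Type := FractionRing (MvPolynomial (Fin 3) ℚ)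

/-- The indeterminate `X`. -/
noncomputable def Xv : MyF := algebraMap (MvPolynomial (Fin 3) ℚ) MyF (MvPolynomial.X 0)
/-- The indeterminate `Y`. -/
noncomputable def Yv : MyF := algebraMap (MvPolynomial (Fin 3) ℚ) MyF (MvPolynomial.X 1)
/-- The indeterminate `q`. -/
noncomputable def qv : MyF := algebraMap (MvPolynomial (Fin 3) ℚ) MyF (MvPolynomial.X 2)

/-- The weight of a lattice path (encoded as a list of steps, `true` = right step,
`false` = down step) starting at a given point: a right step from `(u,v)` to `(u+1,v)`
has weight `(X q^{u-2v} + Y q^{2v-u})/2`, a down step has weight `1`, and the weight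
of the path is the product of the weights of its steps. -/
noncomputable def pathWeight (X Y q : MyF) : ℤ × ℤ → List Bool → MyF
  | _, [] => 1
  | p, true :: s =>
      (X * q ^ (p.1 - 2 * p.2) + Y * q ^ (2 * p.2 - p.1)) / 2 *
        pathWeight X Y q (p.1 + 1, p.2) s
  | p, false :: s => pathWeight X Y q (p.1, p.2 - 1) s

/-- The endpoint of a lattice path (list of steps) starting at a given point. -/
def endpt : ℤ × ℤ → List Bool → ℤ × ℤ
  | p, [] => p
  | p, true :: s => endpt (p.1 + 1, p.2) s
  | p, false :: s => endpt (p.1, p.2 - 1) s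

/-- `gf X Y q a b c d` is the generating function of all lattice paths from `(a,b)`
to `(c,d)` with unit steps to the right and downwards, weighted as in `pathWeight`.
(Any such path has exactly `c-a` right steps and `b-d` down steps, hence length
`(c-a)+(b-d)`; the sum ranges over all step sequences of that length ending at
`(c,d)`.  In particular `gf X Y q a b c d = 0` when `a > c` or `b < d`.) -/
noncomputable def gf (X Y q : MyF) (a b c d : ℤ) : MyF :=
  ∑ s : Fin ((c - a) + (b - d)).toNat → Bool,
    if endpt (a, b) (List.ofFn s) = (c, d) then pathWeight X Y q (a, b) (List.ofFn s) else 0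

lemma qv_ne_zero : qv ≠ 0 := by
  simp only [qv]
  intro h
  have := (map_eq_zero_iff _ (IsFractionRing.injective (MvPolynomial (Fin 3) ℚ) MyF)).mp h
  exact MvPolynomial.X_ne_zero _ this

lemma one_sub_qv_pow_ne_zero (e : ℤ) (he : 0 < e) : (1 : MyF) - qv ^ e ≠ 0 := by
  intro h
  have h1 : qv ^ e = 1 := by linear_combination -h
  rw [show e = (e.toNat : ℤ) by omega, zpow_natCast] at h1
  have : (algebraMap (MvPolynomial (Fin 3) ℚ) MyF) ((MvPolynomial.X 2) ^ e.toNat)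
      = algebraMap (MvPolynomial (Fin 3) ℚ) MyF (1 : MvPolynomial (Fin 3) ℚ) := by
    simpa [qv] using h1
  have h2 := IsFractionRing.injective (MvPolynomial (Fin 3) ℚ) MyF this
  have hk : e.toNat ≠ 0 := by omega
  have h3 := congrArg (MvPolynomial.eval (fun _ => (0:ℚ))) h2
  simp [zero_pow hk] at h3

lemma myTwo_ne_zero : (2 : MyF) ≠ 0 := two_ne_zero

/-- abbreviation for the right-hand side product -/
noncomputable def rhsF (a b c d : ℤ) : MyF :=
  ∏ t ∈ Finset.range (c - a).toNat,
    ((Xv * qv ^ ((t : ℤ) + 1 - 1 - 2 * b + a) + Yv * qv ^ (-((t : ℤ) + 1) + 1 + 2 * d - a)) *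
        (1 - qv ^ (2 * (b - d) + 2 * ((t : ℤ) + 1)))) /
      (2 * (1 - qv ^ (2 * ((t : ℤ) + 1))))

lemma key_scalar (a b d : ℤ) (k : ℕ) :
    ((Xv * qv ^ ((k : ℤ) + 1 - 1 - 2 * b + a) + Yv * qv ^ (-((k : ℤ) + 1) + 1 + 2 * d - a)) *
        (1 - qv ^ (2 * (b - d) + 2 * ((k : ℤ) + 1))))
      = ((Xv * qv ^ (a + (k:ℤ) + 1 - 1 - 2 * d) + Yv * qv ^ (2 * d - (a + (k:ℤ) + 1 - 1))) / 2)
          * (2 * (1 - qv ^ (2 * ((k : ℤ) + 1))))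
        + qv ^ (k:ℤ) *
          ((Xv * qv ^ ((0 : ℤ) + 1 - 1 - 2 * b + a) + Yv * qv ^ (-((0 : ℤ) + 1) + 1 + 2 * (d+1) - a)) *
            (1 - qv ^ (2 * (b - (d+1)) + 2 * ((0 : ℤ) + 1)))) := by
  have hq := qv_ne_zero
  have e1 : qv ^ ((k : ℤ) + 1 - 1 - 2 * b + a) = qv ^ (a - 2*b) * qv ^ (k:ℤ) := by
    rw [← zpow_add₀ hq]; congr 1; ring
  have e2 : qv ^ (-((k : ℤ) + 1) + 1 + 2 * d - a) = qv ^ (2*d - a) * (qv ^ (k:ℤ))⁻¹ := by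
    rw [← zpow_neg, ← zpow_add₀ hq]; congr 1; ring
  have e3 : qv ^ (2 * (b - d) + 2 * ((k : ℤ) + 1))
      = qv ^ (2*(b-d)) * (qv ^ (k:ℤ))^2 * qv^(2:ℤ) := by
    rw [← zpow_natCast (qv ^ (k:ℤ)) 2, ← zpow_mul, ← zpow_add₀ hq, ← zpow_add₀ hq]; congr 1; push_cast; ring
  have e4 : qv ^ (a + (k:ℤ) + 1 - 1 - 2 * d)
      = qv ^ (a - 2*b) * qv ^ (2*(b-d)) * qv ^ (k:ℤ) := by
    rw [← zpow_add₀ hq, ← zpow_add₀ hq]; congr 1; ring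
  have e5 : qv ^ (2 * d - (a + (k:ℤ) + 1 - 1)) = qv ^ (2*d - a) * (qv ^ (k:ℤ))⁻¹ := by
    rw [← zpow_neg, ← zpow_add₀ hq]; congr 1; ring
  have e6 : qv ^ (2 * ((k : ℤ) + 1)) = (qv ^ (k:ℤ))^2 * qv^(2:ℤ) := by
    rw [← zpow_natCast (qv ^ (k:ℤ)) 2, ← zpow_mul, ← zpow_add₀ hq]; congr 1; push_cast; ring
  have e7 : qv ^ ((0 : ℤ) + 1 - 1 - 2 * b + a) = qv ^ (a - 2*b) := by congr 1; ring
  have e8 : qv ^ (-((0 : ℤ) + 1) + 1 + 2 * (d+1) - a) = qv ^ (2*d - a) * qv^(2:ℤ) := by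
    rw [← zpow_add₀ hq]; congr 1; ring
  have e9 : qv ^ (2 * (b - (d+1)) + 2 * ((0 : ℤ) + 1)) = qv ^ (2*(b-d)) := by congr 1; ring
  rw [e1, e2, e3, e4, e5, e6, e7, e8, e9]
  have hK : qv ^ (k:ℤ) ≠ 0 := zpow_ne_zero _ hq
  field_simp
  ring

lemma aux_div (P Q Dk w nk n0 : MyF) (hQ : Q ≠ 0) (hD : Dk ≠ 0) (h : nk = w * Dk + n0) :
    P * nk / (Q * Dk) = P / Q * w + n0 * P / (Q * Dk) := by
  rw [h]
  field_simp

lemma rhsF_step (a b c d : ℤ) (k : ℕ) (hm : c - a = (k:ℤ) + 1) :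
    rhsF a b c d =
      rhsF a b (c-1) d * ((Xv * qv ^ (c - 1 - 2 * d) + Yv * qv ^ (2 * d - (c - 1))) / 2)
        + rhsF a b c (d+1) := by
  have hq := qv_ne_zero
  set Num : ℕ → MyF := fun t =>
    (Xv * qv ^ ((t : ℤ) + 1 - 1 - 2 * b + a) + Yv * qv ^ (-((t : ℤ) + 1) + 1 + 2 * d - a)) *
      (1 - qv ^ (2 * (b - d) + 2 * ((t : ℤ) + 1))) with hNum
  set Num' : ℕ → MyF := fun t =>
    (Xv * qv ^ ((t : ℤ) + 1 - 1 - 2 * b + a) + Yv * qv ^ (-((t : ℤ) + 1) + 1 + 2 * (d+1) - a)) *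
      (1 - qv ^ (2 * (b - (d+1)) + 2 * ((t : ℤ) + 1))) with hNum'
  set Den : ℕ → MyF := fun t => 2 * (1 - qv ^ (2 * ((t : ℤ) + 1))) with hDen
  have hDen_ne : ∀ t : ℕ, Den t ≠ 0 := fun t =>
    mul_ne_zero myTwo_ne_zero (one_sub_qv_pow_ne_zero _ (by positivity))
  have hc1 : (c - 1 - a).toNat = k := by omega
  have hc2 : (c - a).toNat = k + 1 := by omega
  have hshift : ∀ t : ℕ, Num' (t+1) = qv * Num t := by
    intro t
    simp only [hNum, hNum']
    push_cast
    rw [show (t:ℤ) + 1 + 1 - 1 - 2 * b + a = ((t:ℤ) + 1 - 1 - 2 * b + a) + 1 from by ring,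
      show -((t:ℤ) + 1 + 1) + 1 + 2 * (d+1) - a = (-((t:ℤ) + 1) + 1 + 2 * d - a) + 1 from by ring,
      show 2 * (b - (d+1)) + 2 * ((t:ℤ) + 1 + 1) = 2 * (b - d) + 2 * ((t:ℤ) + 1) from by ring,
      zpow_add_one₀ hq, zpow_add_one₀ hq]
    ring
  have hP : rhsF a b (c-1) d = (∏ t ∈ Finset.range k, Num t) / (∏ t ∈ Finset.range k, Den t) := by
    rw [rhsF, hc1, Finset.prod_div_distrib]
  have hQne : (∏ t ∈ Finset.range k, Den t) ≠ 0 := Finset.prod_ne_zero_iff.mpr fun t _ => hDen_ne t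
  have hF : rhsF a b c d = (∏ t ∈ Finset.range k, Num t) * Num k /
      ((∏ t ∈ Finset.range k, Den t) * Den k) := by
    rw [rhsF, hc2, Finset.prod_div_distrib, Finset.prod_range_succ, Finset.prod_range_succ]
  have hG : rhsF a b c (d+1) = (qv ^ (k:ℤ) * Num' 0 * ∏ t ∈ Finset.range k, Num t) /
      ((∏ t ∈ Finset.range k, Den t) * Den k) := by
    rw [rhsF, hc2, Finset.prod_div_distrib, Finset.prod_range_succ' (fun t => Num' t) k]
    have : ∏ t ∈ Finset.range k, Num' (t+1) = qv ^ (k:ℤ) * ∏ t ∈ Finset.range k, Num t := by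
      rw [Finset.prod_congr rfl (fun t _ => hshift t), Finset.prod_mul_distrib,
        Finset.prod_const, Finset.card_range, ← zpow_natCast]
    rw [this]
    have hD : ∏ t ∈ Finset.range (k+1), Den t = (∏ t ∈ Finset.range k, Den t) * Den k :=
      Finset.prod_range_succ _ _
    rw [hD]
    ring
  rw [hF, hP, hG]
  have hkey := key_scalar a b d k
  have hc3 : c - 1 - 2*d = a + (k:ℤ) + 1 - 1 - 2*d := by omega
  have hc4 : 2*d - (c-1) = 2*d - (a + (k:ℤ) + 1 - 1) := by omega
  rw [hc3, hc4]
  have hDk := hDen_ne k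
  have h : Num k = ((Xv * qv ^ (a + (k:ℤ) + 1 - 1 - 2 * d) + Yv * qv ^ (2 * d - (a + (k:ℤ) + 1 - 1))) / 2)
      * Den k + qv ^ (k:ℤ) * Num' 0 := by
    have h0 : Num' 0 = (Xv * qv ^ ((0 : ℤ) + 1 - 1 - 2 * b + a) + Yv * qv ^ (-((0 : ℤ) + 1) + 1 + 2 * (d+1) - a)) *
        (1 - qv ^ (2 * (b - (d+1)) + 2 * ((0 : ℤ) + 1))) := by
      simp only [hNum']; norm_num
    rw [h0]
    exact hkey
  exact aux_div _ _ _ _ _ _ hQne hDk h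

lemma endpt_append (p : ℤ × ℤ) (l l' : List Bool) :
    endpt p (l ++ l') = endpt (endpt p l) l' := by
  induction l generalizing p with
  | nil => rfl
  | cons x t ih => cases x <;> simp [endpt, ih]

lemma pathWeight_append (X Y q : MyF) (p : ℤ × ℤ) (l l' : List Bool) :
    pathWeight X Y q p (l ++ l') = pathWeight X Y q p l * pathWeight X Y q (endpt p l) l' := by
  induction l generalizing p with
  | nil => simp [pathWeight, endpt]
  | cons x t ih => cases x <;> simp [pathWeight, endpt, ih] <;> ring

lemma endpt_le (p : ℤ × ℤ) (l : List Bool) :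
    p.1 ≤ (endpt p l).1 ∧ (endpt p l).2 ≤ p.2 := by
  induction l generalizing p with
  | nil => simp [endpt]
  | cons x t ih =>
    cases x <;> simp only [endpt] <;>
      [ (exact ⟨(ih _).1, le_trans (ih _).2 (by simp)⟩);
        (exact ⟨le_trans (by simp) (ih _).1, (ih _).2⟩)]

lemma gf_vanish (X Y q : MyF) (a b c d : ℤ) (h : c < a ∨ b < d) : gf X Y q a b c d = 0 := by
  rw [gf]
  refine Finset.sum_eq_zero fun s _ => ?_
  rw [if_neg]
  intro he
  have := endpt_le (a, b) (List.ofFn s)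
  rw [he] at this
  rcases h with h | h <;> [exact absurd this.1 (by simpa using h); exact absurd this.2 (by simpa using h)]


lemma ofFn_snoc' {k : ℕ} (s : Fin k → Bool) (x : Bool) :
    List.ofFn (Fin.snoc s x : Fin (k+1) → Bool) = List.ofFn s ++ [x] := by
  rw [List.ofFn_succ']
  simp [List.concat_eq_append]

lemma gf_eq_sum (X Y q : MyF) (a b c d : ℤ) (N : ℕ) (h : ((c - a) + (b - d)).toNat = N) :
    gf X Y q a b c d = ∑ s : Fin N → Bool,
      if endpt (a, b) (List.ofFn s) = (c, d) then pathWeight X Y q (a, b) (List.ofFn s) else 0 := by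
  subst h; rfl

lemma gf_rec (X Y q : MyF) (a b c d : ℤ) (k : ℕ)
    (hN : ((c - a) + (b - d)).toNat = k + 1)
    (h1 : ((c - 1 - a) + (b - d)).toNat = k)
    (h2 : ((c - a) + (b - (d + 1))).toNat = k) :
    gf X Y q a b c d =
      gf X Y q a b (c-1) d * ((X * q ^ (c - 1 - 2 * d) + Y * q ^ (2 * d - (c - 1))) / 2)
        + gf X Y q a b c (d+1) := by
  rw [gf_eq_sum X Y q a b c d (k+1) hN, gf_eq_sum X Y q a b (c-1) d k h1,
    gf_eq_sum X Y q a b c (d+1) k h2]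
  rw [← Equiv.sum_comp (Fin.snocEquiv (fun _ => Bool)), Fintype.sum_prod_type, Fintype.sum_bool]
  have htrue : ∑ s : Fin k → Bool,
      (if endpt (a,b) (List.ofFn s ++ [true]) = (c,d)
        then pathWeight X Y q (a,b) (List.ofFn s ++ [true]) else 0)
      = (∑ s : Fin k → Bool,
          if endpt (a,b) (List.ofFn s) = (c-1,d)
            then pathWeight X Y q (a,b) (List.ofFn s) else 0)
        * ((X * q ^ (c - 1 - 2 * d) + Y * q ^ (2 * d - (c - 1))) / 2) := by
    rw [Finset.sum_mul]
    refine Finset.sum_congr rfl fun s _ => ?_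
    rw [pathWeight_append, endpt_append]
    set e := endpt (a,b) (List.ofFn s) with hee
    have hc : (endpt e [true] = (c,d)) ↔ e = (c-1,d) := by
      show ((e.1 + 1, e.2) : ℤ × ℤ) = (c, d) ↔ _
      rw [Prod.ext_iff, Prod.ext_iff]
      constructor <;> (intro h; constructor <;> [omega; exact h.2])
    by_cases h : e = (c-1, d)
    · rw [if_pos (hc.mpr h), if_pos h, h]
      show _ * pathWeight X Y q ((c-1 : ℤ), (d : ℤ)) [true] = _
      simp only [pathWeight]
      ring
    · rw [if_neg (fun hh => h (hc.mp hh)), if_neg h, zero_mul]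
  have hfalse : ∑ s : Fin k → Bool,
      (if endpt (a,b) (List.ofFn s ++ [false]) = (c,d)
        then pathWeight X Y q (a,b) (List.ofFn s ++ [false]) else 0)
      = ∑ s : Fin k → Bool,
          if endpt (a,b) (List.ofFn s) = (c,d+1)
            then pathWeight X Y q (a,b) (List.ofFn s) else 0 := by
    refine Finset.sum_congr rfl fun s _ => ?_
    rw [pathWeight_append, endpt_append]
    set e := endpt (a,b) (List.ofFn s) with hee
    have hc : (endpt e [false] = (c,d)) ↔ e = (c,d+1) := by
      show ((e.1, e.2 - 1) : ℤ × ℤ) = (c, d) ↔ _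
      rw [Prod.ext_iff, Prod.ext_iff]
      constructor <;> (intro h; constructor <;> [exact h.1; omega])
    by_cases h : e = (c, d+1)
    · rw [if_pos (hc.mpr h), if_pos h, h]
      show _ * pathWeight X Y q ((c : ℤ), (d+1-1 : ℤ)) [] = _
      simp [pathWeight]
    · rw [if_neg (fun hh => h (hc.mp hh)), if_neg h]
  rw [← htrue, ← hfalse]
  congr 1 <;>
  · refine Finset.sum_congr rfl fun s _ => ?_
    rw [show (Fin.snocEquiv (fun _ => Bool)) (_, s) = Fin.snoc s _ from rfl, ofFn_snoc']


lemma main_ind : ∀ N : ℕ, ∀ a b c d : ℤ, a ≤ c → d ≤ b → ((c - a) + (b - d)).toNat = N →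
    gf Xv Yv qv a b c d = rhsF a b c d := by
  intro N
  induction N with
  | zero =>
    intro a b c d hac hdb hN
    have hca : c = a := by omega
    have hbd : b = d := by omega
    have h1 : (c - a).toNat = 0 := by omega
    rw [gf, rhsF, hN, h1]
    simp [endpt, pathWeight, hca, hbd]
  | succ k ih =>
    intro a b c d hac hdb hN
    rw [gf_rec Xv Yv qv a b c d k hN (by omega) (by omega)]
    by_cases hca : a ≤ c - 1
    · have h1 : gf Xv Yv qv a b (c-1) d = rhsF a b (c-1) d := ih a b (c-1) d hca hdb (by omega)
      have h2 : gf Xv Yv qv a b c (d+1) = rhsF a b c (d+1) := by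
        by_cases hd : d + 1 ≤ b
        · exact ih a b c (d+1) hac hd (by omega)
        · rw [gf_vanish _ _ _ _ _ _ _ (Or.inr (by omega))]
          symm
          rw [rhsF]
          apply Finset.prod_eq_zero (i := 0) (Finset.mem_range.mpr (show 0 < (c - a).toNat by omega))
          have hz : (2 * (b - (d+1)) + 2 * (((0:ℕ):ℤ) + 1)) = 0 := by push_cast; omega
          rw [hz]
          simp
      rw [h1, h2, ← rhsF_step a b c d (c - a - 1).toNat (by omega)]
    · have hdb' : d + 1 ≤ b := by omega
      rw [gf_vanish _ _ _ _ _ _ _ (Or.inl (by omega)), ih a b c (d+1) hac hdb' (by omega)]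
      rw [zero_mul, zero_add, rhsF, rhsF]
      have h1 : (c - a).toNat = 0 := by omega
      rw [h1]
      simp

theorem gf_eval (a b c d : ℤ) :
    (a ≤ c → d ≤ b →
      gf Xv Yv qv a b c d =
        ∏ t ∈ Finset.range (c - a).toNat,
          ((Xv * qv ^ ((t : ℤ) + 1 - 1 - 2 * b + a) + Yv * qv ^ (-((t : ℤ) + 1) + 1 + 2 * d - a)) *
              (1 - qv ^ (2 * (b - d) + 2 * ((t : ℤ) + 1)))) /
            (2 * (1 - qv ^ (2 * ((t : ℤ) + 1)))))
    ∧ (c < a ∨ b < d → gf Xv Yv qv a b c d = 0) := by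
  constructor
  · intro hac hdb
    have h := main_ind (((c - a) + (b - d)).toNat) a b c d hac hdb rfl
    rw [rhsF] at h
    exact h
  · exact fun h => gf_vanish _ _ _ _ _ _ _ h
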